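/- Let Cyl : K → K be a cylinder functor on a category K with pushouts and finite coproducts, with natural transformations γ : Id ⊔ Id ⇒ Cyl and σ : Cyl ⇒ Id such that σγ is the codiagonal. Let i be an object such that γ_i : i ⊔ i → Cyl(i) is an epimorphism. Then for every object (e : i → X) of i↓K, the underlying object of Cyl_i(i → X) (defined as the pushout of Cyl(e) along σ_i) is also the pushout of the composite i ⊔ i → X ⊔ X → Cyl(X) along the codiagonal i ⊔ i → i. -/

import Mathlib

open CategoryTheory CategoryTheory.Limits

universe v u

/-- If `γ_i : i ⨿ i ⟶ Cyl(i)` is an epimorphism, then for every `e : i ⟶ X` the pushout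
of `Cyl(e)` along `σ_i` (the underlying object of `Cyl_i(i ⟶ X)`) is also the pushout of
the composite `i ⨿ i ⟶ X ⨿ X ⟶ Cyl(X)` along the codiagonal `i ⨿ i ⟶ i`. -/
theorem cylUnder_pushout_of_epi
    {K : Type u} [Category.{v} K] [HasPushouts K] [HasBinaryCoproducts K]
    (Cyl : K ⥤ K) (σ : Cyl ⟶ 𝟭 K)
    (γ : ∀ X : K, X ⨿ X ⟶ Cyl.obj X)
    (γ_natural : ∀ {X Y : K} (f : X ⟶ Y), coprod.map f f ≫ γ Y = γ X ≫ Cyl.map f)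
    (hσγ : ∀ X : K, γ X ≫ σ.app X = codiag X)
    (i : K) (hepi : Epi (γ i)) {X : K} (e : i ⟶ X) :
    ∃ φ : pushout (σ.app i) (Cyl.map e) ≅ pushout (codiag i) (coprod.map e e ≫ γ X),
      pushout.inl (σ.app i) (Cyl.map e) ≫ φ.hom
          = pushout.inl (codiag i) (coprod.map e e ≫ γ X) ∧
      pushout.inr (σ.app i) (Cyl.map e) ≫ φ.hom
          = pushout.inr (codiag i) (coprod.map e e ≫ γ X) := by
  have w1 : σ.app i ≫ pushout.inl (codiag i) (coprod.map e e ≫ γ X)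
      = Cyl.map e ≫ pushout.inr (codiag i) (coprod.map e e ≫ γ X) := by
    apply (cancel_epi (γ i)).mp
    rw [← Category.assoc, hσγ, pushout.condition, ← Category.assoc]
    congr 1
    exact γ_natural e
  have w2 : codiag i ≫ pushout.inl (σ.app i) (Cyl.map e)
      = (coprod.map e e ≫ γ X) ≫ pushout.inr (σ.app i) (Cyl.map e) := by
    rw [← hσγ, γ_natural, Category.assoc, Category.assoc, pushout.condition]
  refine ⟨⟨pushout.desc _ _ w1, pushout.desc _ _ w2, ?_, ?_⟩, pushout.inl_desc _ _ _, pushout.inr_desc _ _ _⟩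
  · apply pushout.hom_ext <;> simp only [pushout.inl_desc_assoc, pushout.inr_desc_assoc, pushout.inl_desc, pushout.inr_desc, Category.comp_id]
  · apply pushout.hom_ext <;> simp only [pushout.inl_desc_assoc, pushout.inr_desc_assoc, pushout.inl_desc, pushout.inr_desc, Category.comp_id]
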